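/- Consider any set of n' agents with unit-sum valuations over m alternatives and preference rankings consistent with the valuations. If alternative a is a plurality winner (an alternative ranked first by at least as many of these agents as any other alternative), then the social welfare of a over these agents is at least n'/m², while the social welfare of any alternative over these agents is at most n'; hence plurality, as a centralized voting rule, has distortion at most m². -/

import Mathlib

/-
STATEMENT 8:
Consider any set of n' agents with unit-sum valuations over m alternatives and preference
rankings consistent with the valuations. If alternative a is a plurality winner (an alternative
ranked first by at least as many of these agents as any other alternative), then the social
welfare of a over these agents is at least n'/m², while the social welfare of any alternative
over these agents is at most n'; hence plurality, as a centralized voting rule, has distortion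
at most m².

Rankings are position functions `σ i : Fin m ≃ Fin m` (position 0 = top), so the top-ranked
alternative of agent i is `(σ i).symm 0`.
-/
theorem stmt8
    (n' m : ℕ) (hm : 2 ≤ m)
    (v : Fin n' → Fin m → ℝ)
    (σ : Fin n' → (Fin m ≃ Fin m))
    (hv0 : ∀ i a, 0 ≤ v i a)
    (hv1 : ∀ i, ∑ a, v i a = 1)
    (hcons : ∀ i a b, σ i a < σ i b → v i b ≤ v i a)
    (a : Fin m)
    (hplur : ∀ b : Fin m,
      (Finset.univ.filter fun i : Fin n' => (σ i).symm ⟨0, by omega⟩ = b).card ≤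
        (Finset.univ.filter fun i : Fin n' => (σ i).symm ⟨0, by omega⟩ = a).card) :
    (n' : ℝ) / (m : ℝ) ^ 2 ≤ (∑ i, v i a) ∧
    (∀ b, (∑ i, v i b) ≤ (n' : ℝ)) ∧
    (∀ b, (∑ i, v i b) ≤ (m : ℝ) ^ 2 * ∑ i, v i a) := by
  have hm0 : (0:ℝ) < m := by
    have : 0 < m := by omega
    exact_mod_cast this
  set t : Fin n' → Fin m := fun i => (σ i).symm ⟨0, by omega⟩ with ht
  -- top alternative has value ≥ 1/m
  have htop : ∀ i, 1 / (m:ℝ) ≤ v i (t i) := by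
    intro i
    have hmax : ∀ c, v i c ≤ v i (t i) := by
      intro c
      rcases eq_or_ne (σ i c) ⟨0, by omega⟩ with h | h
      · have : c = t i := by
          simp [ht, ← h]
        simp [this]
      · have hlt : σ i (t i) < σ i c := by
          have h0 : σ i (t i) = ⟨0, by omega⟩ := by simp [ht]
          rw [h0]
          have hne : ((σ i c : Fin m) : ℕ) ≠ 0 := fun h0 => h (Fin.ext h0)
          rw [Fin.lt_def]
          simpa using Nat.pos_of_ne_zero hne
        exact hcons i _ _ hlt
    have hsum : (1:ℝ) ≤ m * v i (t i) := by
      calc (1:ℝ) = ∑ c, v i c := (hv1 i).symm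
        _ ≤ ∑ _c : Fin m, v i (t i) := Finset.sum_le_sum fun c _ => hmax c
        _ = m * v i (t i) := by simp [mul_comm]
    rw [div_le_iff₀ hm0] at *
    linarith [hsum]
  -- each value ≤ 1
  have hle1 : ∀ i b, v i b ≤ 1 := by
    intro i b
    rw [← hv1 i]
    exact Finset.single_le_sum (fun c _ => hv0 i c) (Finset.mem_univ b)
  set N := (Finset.univ.filter fun i : Fin n' => t i = a).card with hN
  have hcard : n' ≤ m * N := by
    have h1 : (Finset.univ : Finset (Fin n')).card =
        ∑ b : Fin m, (Finset.univ.filter fun i : Fin n' => t i = b).card :=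
      Finset.card_eq_sum_card_fiberwise (fun i _ => Finset.mem_univ (t i))
    have h2 : ∑ b : Fin m, (Finset.univ.filter fun i : Fin n' => t i = b).card
        ≤ m * N := by
          calc ∑ b : Fin m, (Finset.univ.filter fun i : Fin n' => t i = b).card
              ≤ ∑ _b : Fin m, N := Finset.sum_le_sum fun b _ => hplur b
            _ = m * N := by simp [mul_comm]
    simp only [Finset.card_univ, Fintype.card_fin] at h1
    simpa [mul_comm] using h1 ▸ h2
  have hSWa : (n':ℝ) / (m:ℝ)^2 ≤ ∑ i, v i a := by
    have h1 : ((N:ℝ)) * (1 / m) ≤ ∑ i, v i a := by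
      calc (N:ℝ) * (1 / m)
          = ∑ _i ∈ Finset.univ.filter fun i : Fin n' => t i = a, (1:ℝ)/m := by
            simp [hN, mul_comm]
        _ ≤ ∑ i ∈ Finset.univ.filter fun i : Fin n' => t i = a, v i a := by
            apply Finset.sum_le_sum
            intro i hi
            have : t i = a := by simpa using hi
            simpa [this] using htop i
        _ ≤ ∑ i, v i a := Finset.sum_le_sum_of_subset_of_nonneg
            (Finset.filter_subset _ _) (fun i _ _ => hv0 i a)
    have h2 : (n':ℝ) ≤ m * N := by exact_mod_cast hcard
    rw [div_le_iff₀ (by positivity)]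
    calc (n':ℝ) ≤ m * N := h2
      _ = (N * (1/m)) * m^2 := by field_simp
      _ ≤ (∑ i, v i a) * m^2 := by nlinarith [h1]
  have hSWb : ∀ b, (∑ i, v i b) ≤ (n':ℝ) := by
    intro b
    calc ∑ i, v i b ≤ ∑ _i : Fin n', (1:ℝ) := Finset.sum_le_sum fun i _ => hle1 i b
      _ = n' := by simp
  refine ⟨hSWa, hSWb, fun b => ?_⟩
  calc ∑ i, v i b ≤ (n':ℝ) := hSWb b
    _ = (m:ℝ)^2 * ((n':ℝ)/(m:ℝ)^2) := by field_simp
    _ ≤ (m:ℝ)^2 * ∑ i, v i a := by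
        apply mul_le_mul_of_nonneg_left hSWa (by positivity)
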